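/- The map sending t to s^{-1}(s-1)^2 and u to s - s^{-1} defines a C-algebra isomorphism from R = C[t, t^{-1}, u | u^2 = t^2 + 4t] to S = C[s, s^{-1}, (s-1)^{-1}]. -/

import Mathlib

open Polynomial LaurentPolynomial

/-- The three-point ring `R = ℂ[t,t⁻¹,u | u² = t² + 4t]`. -/
noncomputable abbrev ThreePointRing : Type :=
  AdjoinRoot (Polynomial.X ^ 2 -
    Polynomial.C (LaurentPolynomial.T 1 ^ 2 + 4 * LaurentPolynomial.T 1) :
      Polynomial (LaurentPolynomial ℂ))

/-- The element `t` of the three-point ring. -/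
noncomputable def tR : ThreePointRing := AdjoinRoot.of _ (LaurentPolynomial.T 1)

/-- The element `u` of the three-point ring. -/
noncomputable def uR : ThreePointRing := AdjoinRoot.root _

/-- The ring `S = ℂ[s, s⁻¹, (s-1)⁻¹]`, i.e. the localization of `ℂ[s]` at the
multiplicative set generated by `s` and `s - 1`. -/
abbrev SRing : Type :=
  Localization (Submonoid.closure {(Polynomial.X : Polynomial ℂ), Polynomial.X - 1})

noncomputable def sS : SRing := algebraMap (Polynomial ℂ) SRing Polynomial.X

/-- the map `t ↦ s⁻¹(s-1)²`, `u ↦ s - s⁻¹` defines a `ℂ`-algebra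
isomorphism `R ≃ S`.  (Since `s` is invertible in `S`, the conditions
`e t = s⁻¹ (s-1)²` and `e u = s - s⁻¹` are expressed by multiplying through by `s`.) -/
-- units in S
noncomputable def usU : SRingˣ :=
  (IsLocalization.map_units SRing (⟨X, Submonoid.subset_closure (by simp)⟩ :
    Submonoid.closure {(Polynomial.X : Polynomial ℂ), Polynomial.X - 1})).unit
noncomputable def us1U : SRingˣ :=
  (IsLocalization.map_units SRing (⟨X - 1, Submonoid.subset_closure (by simp)⟩ :
    Submonoid.closure {(Polynomial.X : Polynomial ℂ), Polynomial.X - 1})).unit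
lemma usU_val : (usU : SRing) = sS := rfl
lemma us1U_val : (us1U : SRing) = sS - 1 := by
  simp [us1U, sS, IsUnit.unit_spec, map_sub, map_one]

noncomputable def wU : SRingˣ := usU⁻¹ * us1U ^ 2

noncomputable def Lmap : LaurentPolynomial ℂ →ₐ[ℂ] SRing :=
  AddMonoidAlgebra.lift ℂ SRing ℤ ((Units.coeHom SRing).comp (zpowersHom SRingˣ wU))

lemma Lmap_T (n : ℤ) : Lmap (T n) = ((wU ^ n : SRingˣ) : SRing) := by
  rw [Lmap, T, AddMonoidAlgebra.lift_single, one_smul]; rfl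

lemma Lmap_T' (n : ℤ) : Lmap (T n) = ((wU ^ n : SRingˣ) : SRing) := by
  rw [Lmap, T, AddMonoidAlgebra.lift_single, one_smul]; rfl

lemma hab : sS * ((usU⁻¹ : SRingˣ) : SRing) = 1 := by
  rw [← usU_val, ← Units.val_mul, mul_inv_cancel, Units.val_one]

lemma wU_val : ((wU : SRingˣ) : SRing) = ((usU⁻¹ : SRingˣ) : SRing) * (sS - 1) ^ 2 := by
  rw [wU, Units.val_mul, Units.val_pow_eq_pow_val, us1U_val]

lemma key_rel : (sS - ((usU⁻¹ : SRingˣ) : SRing)) ^ 2 =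
    ((wU : SRingˣ) : SRing) ^ 2 + 4 * ((wU : SRingˣ) : SRing) := by
  have h := hab
  rw [wU_val]
  set b := ((usU⁻¹ : SRingˣ) : SRing)
  linear_combination (-(4 + 2*(sS-2+b)*(sS-2) + (sS-2)^2*(sS*b-1) + 4*(sS-2))) * h

noncomputable abbrev fpoly : Polynomial (LaurentPolynomial ℂ) :=
  (Polynomial.X ^ 2 -
    Polynomial.C (LaurentPolynomial.T 1 ^ 2 + 4 * LaurentPolynomial.T 1))

lemma eval_rel : fpoly.eval₂ Lmap.toRingHom (sS - ((usU⁻¹ : SRingˣ) : SRing)) = 0 := by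
  rw [fpoly, eval₂_sub, eval₂_pow, eval₂_X, Polynomial.eval₂_C]
  have : Lmap (T 1 ^ 2 + 4 * T 1) = ((wU : SRingˣ) : SRing) ^ 2 + 4 * ((wU : SRingˣ) : SRing) := by
    rw [map_add, map_pow, map_mul, Lmap_T, zpow_one, map_ofNat]
  rw [AlgHom.toRingHom_eq_coe, RingHom.coe_coe, this, key_rel, sub_self]

noncomputable def psi : ThreePointRing →+* SRing :=
  AdjoinRoot.lift Lmap.toRingHom (sS - ((usU⁻¹ : SRingˣ) : SRing)) eval_rel

lemma psi_t : psi tR = ((wU : SRingˣ) : SRing) := by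
  rw [tR, psi, AdjoinRoot.lift_of, AlgHom.toRingHom_eq_coe, RingHom.coe_coe, Lmap_T, zpow_one]

lemma psi_u : psi uR = sS - ((usU⁻¹ : SRingˣ) : SRing) := by
  rw [uR, psi, AdjoinRoot.lift_root]

noncomputable def psiA : ThreePointRing →ₐ[ℂ] SRing :=
  { psi with
    commutes' := fun c => by
      have h1 : algebraMap ℂ ThreePointRing c =
          AdjoinRoot.of fpoly (algebraMap ℂ (LaurentPolynomial ℂ) c) := by
        rw [AdjoinRoot.algebraMap_eq']; rfl
      show psi _ = _
      rw [h1, psi, AdjoinRoot.lift_of, AlgHom.toRingHom_eq_coe, RingHom.coe_coe,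
        AlgHom.commutes] }

noncomputable def tinv : ThreePointRing := AdjoinRoot.of fpoly (T (-1))
noncomputable def hR : ThreePointRing := algebraMap ℂ ThreePointRing (2⁻¹)
noncomputable def rR : ThreePointRing := (tR + 2 + uR) * hR
noncomputable def rR' : ThreePointRing := (tR + 2 - uR) * hR
noncomputable def mR : ThreePointRing := (uR - tR) * hR * tinv

lemma hh : (2 : ThreePointRing) * hR = 1 := by
  have : (2 : ThreePointRing) = algebraMap ℂ ThreePointRing 2 := by rw [map_ofNat]
  rw [this, hR, ← map_mul]
  norm_num

lemma htt : tR * tinv = 1 := by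
  rw [tR, tinv, ← map_mul, ← T_add]
  norm_num [T_zero]

lemma hrel : uR ^ 2 = tR ^ 2 + 4 * tR := by
  have h := AdjoinRoot.mk_self (f := fpoly)
  rw [fpoly, map_sub, map_pow, AdjoinRoot.mk_X, AdjoinRoot.mk_C, sub_eq_zero] at h
  rw [uR, tR, h, map_add, map_pow, map_mul, map_ofNat]

lemma hr : rR * rR' = 1 := by
  rw [rR, rR']
  linear_combination (2*hR+1)*hh - hR^2*hrel

lemma hr1 : (rR - 1) * mR = 1 := by
  rw [rR, mR]
  linear_combination ((uR-tR)*hR*tinv + (2*hR+1)*tR*tinv)*hh + hR^2*tinv*hrel + htt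

noncomputable def pX : Polynomial ℂ →ₐ[ℂ] ThreePointRing := Polynomial.aeval rR

lemma hg : ∀ y : (Submonoid.closure {(Polynomial.X : Polynomial ℂ), Polynomial.X - 1}),
    IsUnit (pX y) := by
  rintro ⟨y, hy⟩
  induction hy using Submonoid.closure_induction with
  | mem z hz =>
    rcases hz with rfl | rfl
    · exact IsUnit.of_mul_eq_one rR' (by rw [pX, aeval_X]; exact hr)
    · refine IsUnit.of_mul_eq_one mR ?_
      rw [pX, map_sub, aeval_X, map_one]; exact hr1
  | one => simp
  | mul a b ha hb iha ihb => rw [map_mul]; exact iha.mul ihb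

noncomputable def phi : SRing →+* ThreePointRing := IsLocalization.lift hg

lemma phi_s : phi sS = rR := by
  rw [sS, phi, IsLocalization.lift_eq, pX]
  simp

lemma phi_b : phi ((usU⁻¹ : SRingˣ) : SRing) = rR' := by
  have h1 : rR * phi ((usU⁻¹ : SRingˣ) : SRing) = 1 := by
    rw [← phi_s, ← map_mul, hab, map_one]
  exact ((IsUnit.of_mul_eq_one (a := rR) rR' hr).mul_left_cancel (by rw [h1, hr])).symm

noncomputable def phiA : SRing →ₐ[ℂ] ThreePointRing :=
  { phi with
    commutes' := fun c => by
      have h1 : algebraMap ℂ SRing c = algebraMap (Polynomial ℂ) SRing (C c) := by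
        rw [IsScalarTower.algebraMap_apply ℂ (Polynomial ℂ) SRing, Polynomial.algebraMap_apply]
        norm_num
      show phi _ = _
      rw [h1, phi, IsLocalization.lift_eq, pX]
      simp }

lemma psi_algebraMap (c : ℂ) : psi (algebraMap ℂ ThreePointRing c) = algebraMap ℂ SRing c :=
  psiA.commutes c

lemma phi_algebraMap (c : ℂ) : phi (algebraMap ℂ SRing c) = algebraMap ℂ ThreePointRing c :=
  phiA.commutes c

lemma psi_phi : psi.comp phi = RingHom.id SRing := by
  apply IsLocalization.ringHom_ext
    (Submonoid.closure {(Polynomial.X : Polynomial ℂ), Polynomial.X - 1})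
  apply Polynomial.ringHom_ext
  · intro a
    have h1 : algebraMap (Polynomial ℂ) SRing (C a) = algebraMap ℂ SRing a := by
      rw [IsScalarTower.algebraMap_apply ℂ (Polynomial ℂ) SRing, Polynomial.algebraMap_apply]
      norm_num
    simp only [RingHom.comp_apply, RingHom.id_apply, h1, phi_algebraMap, psi_algebraMap]
  · have hhs : (2 : SRing) * algebraMap ℂ SRing 2⁻¹ = 1 := by
      rw [show (2 : SRing) = algebraMap ℂ SRing 2 by rw [map_ofNat], ← map_mul]
      norm_num
    have hpsihR : psi hR = algebraMap ℂ SRing 2⁻¹ := psi_algebraMap _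
    simp only [RingHom.comp_apply, RingHom.id_apply]
    rw [← sS, phi_s, rR, map_mul, map_add, map_add, psi_t, psi_u, hpsihR,
      show psi 2 = 2 from map_ofNat psi 2, wU_val]
    set b := ((usU⁻¹ : SRingˣ) : SRing)
    set hs := algebraMap ℂ SRing 2⁻¹
    linear_combination sS*hhs + (sS-2)*hs*hab

lemma htt' : tinv * tR = 1 := by rw [mul_comm]; exact htt

noncomputable def tU : ThreePointRingˣ := ⟨tR, tinv, htt, htt'⟩

lemma of_T (n : ℤ) : AdjoinRoot.of fpoly (T n) = ((tU ^ n : ThreePointRingˣ) : ThreePointRing) := by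
  cases n with
  | ofNat k =>
    rw [Int.ofNat_eq_coe, zpow_natCast, Units.val_pow_eq_pow_val,
      show ((tU : ThreePointRingˣ) : ThreePointRing) = tR from rfl, tR, ← map_pow]
    congr 1
    rw [T_pow]
    norm_num
  | negSucc k =>
    rw [zpow_negSucc, ← inv_pow, Units.val_pow_eq_pow_val,
      show ((tU⁻¹ : ThreePointRingˣ) : ThreePointRing) = tinv from rfl, tinv, ← map_pow]
    congr 1
    rw [T_pow, Int.negSucc_eq]
    congr 1
    push_cast
    ring

lemma phi_psi_t : phi (psi tR) = tR := by
  rw [psi_t, wU_val, map_mul, map_pow, map_sub, map_one, phi_b, phi_s, rR, rR']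
  linear_combination ((4*hR^2+2*hR+1)*tR + (tR+2-uR)*hR*(2*(tR+uR)*hR + 2*hR - 1))*hh
    + hR^3*(2-uR-tR)*hrel

lemma phi_psi_u : phi (psi uR) = uR := by
  rw [psi_u, map_sub, phi_b, phi_s, rR, rR']
  linear_combination uR*hh

lemma phi_psi_of : (phi.comp psi).comp (AdjoinRoot.of fpoly) = AdjoinRoot.of fpoly := by
  apply AddMonoidAlgebra.ringHom_ext
  · intro b
    have hC : (AddMonoidAlgebra.single (0:ℤ) b : LaurentPolynomial ℂ)
        = algebraMap ℂ (LaurentPolynomial ℂ) b := by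
      rw [LaurentPolynomial.single_eq_C, LaurentPolynomial.C_eq_algebraMap]
    show (phi.comp psi) (AdjoinRoot.of fpoly (AddMonoidAlgebra.single (0:ℤ) b))
        = AdjoinRoot.of fpoly (AddMonoidAlgebra.single (0:ℤ) b)
    rw [hC,
      show (AdjoinRoot.of fpoly) ((algebraMap ℂ (LaurentPolynomial ℂ)) b)
          = algebraMap ℂ ThreePointRing b by rw [AdjoinRoot.algebraMap_eq']; rfl,
      RingHom.comp_apply, psi_algebraMap, phi_algebraMap]
  · intro n
    show (phi.comp psi) (AdjoinRoot.of fpoly (T n)) = AdjoinRoot.of fpoly (T n)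
    rw [of_T]
    have hval : ∀ (F : ThreePointRing →+* ThreePointRing) (v : ThreePointRingˣ) (m : ℤ),
        F ((v ^ m : ThreePointRingˣ) : ThreePointRing)
          = (((Units.map F.toMonoidHom v) ^ m : ThreePointRingˣ) : ThreePointRing) := by
      intro F v m
      rw [← map_zpow (Units.map F.toMonoidHom) v m]
      rfl
    rw [hval (phi.comp psi) tU n]
    congr 2
    ext
    show (phi.comp psi) tR = tR
    exact phi_psi_t

lemma phi_psi : phi.comp psi = RingHom.id ThreePointRing := by
  have hmk : ∀ p : Polynomial (LaurentPolynomial ℂ),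
      (phi.comp psi) (AdjoinRoot.mk fpoly p) = AdjoinRoot.mk fpoly p := by
    intro p
    have key : ((phi.comp psi).comp (AdjoinRoot.mk fpoly)) =
        (RingHom.id ThreePointRing).comp (AdjoinRoot.mk fpoly) := by
      apply Polynomial.ringHom_ext
      · intro a
        simpa using RingHom.congr_fun phi_psi_of a
      · show (phi.comp psi) (AdjoinRoot.root fpoly) = AdjoinRoot.root fpoly
        rw [← uR, RingHom.comp_apply, phi_psi_u]
    simpa using RingHom.congr_fun key p
  refine RingHom.ext fun x => ?_
  induction x using AdjoinRoot.induction_on with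
  | ih p => simpa using hmk p

noncomputable def eIso : ThreePointRing ≃ₐ[ℂ] SRing :=
  AlgEquiv.ofAlgHom psiA phiA
    (AlgHom.ext fun x => RingHom.congr_fun psi_phi x)
    (AlgHom.ext fun x => RingHom.congr_fun phi_psi x)


theorem three_point_ring_iso :
    ∃ e : ThreePointRing ≃ₐ[ℂ] SRing,
      sS * e tR = (sS - 1) ^ 2 ∧ sS * e uR = sS ^ 2 - 1 := by
  refine ⟨eIso, ?_, ?_⟩
  · show sS * psi tR = (sS - 1) ^ 2
    rw [psi_t, wU_val]
    linear_combination (sS-1)^2 * hab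
  · show sS * psi uR = sS ^ 2 - 1
    rw [psi_u]
    linear_combination -hab
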